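/- Let p be prime, k ≥ 1, n a positive integer with gcd(n, p) = 1, and R_k = Z_p[u]/(u^k). Let C be the cyclic code of length n over R_k given by C = <g(x), u·a1(x), u^2·a2(x), ..., u^{k-1}·a_{k-1}(x)> where a_{k-1}(x) | a_{k-2}(x) | ... | a1(x) | g(x) | (x^n - 1) in Z_p[x]. Then C is the principal ideal generated by g(x) + u·a1(x) + u^2·a2(x) + ... + u^{k-1}·a_{k-1}(x). -/

import Mathlib

open Polynomial

noncomputable section

/-- `Ru p k` is the ring `R_k = Z_p[u]/(u^k)`. -/
abbrev Ru (p k : ℕ) : Type := Polynomial (ZMod p) ⧸ Ideal.span {(X : Polynomial (ZMod p)) ^ k}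

instance instCommRingRu (p k : ℕ) : CommRing (Ru p k) := Ideal.Quotient.commRing _

/-- The element `u` of `Ru p k`. -/
abbrev uR (p k : ℕ) : Ru p k := Ideal.Quotient.mk _ (X : Polynomial (ZMod p))

/-- `Rn p k n` is the ring `R_k[x]/(x^n - 1)`; its ideals are the cyclic codes of length `n`. -/
abbrev Rn (p k n : ℕ) : Type :=
  Polynomial (Ru p k) ⧸ Ideal.span {(X : Polynomial (Ru p k)) ^ n - 1}

/-- The natural ring map `Z_p[x] → R_k[x]/(x^n - 1)`. -/
abbrev liftP (p k n : ℕ) : Polynomial (ZMod p) →+* Rn p k n :=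
  (Ideal.Quotient.mk _).comp (mapRingHom (algebraMap (ZMod p) (Ru p k)))

/-- `u` as an element of `R_k[x]/(x^n - 1)`. -/
abbrev uu (p k n : ℕ) : Rn p k n := Ideal.Quotient.mk _ (C (uR p k))

/-- `x` as an element of `R_k[x]/(x^n - 1)`. -/
abbrev xx (p k n : ℕ) : Rn p k n := Ideal.Quotient.mk _ (X : Polynomial (Ru p k))

/-- Over `R_k = Z_p[u]/(u^k)` with `gcd(n,p) = 1`, if
`C = <a_0(x), u a_1(x), ..., u^{k-1} a_{k-1}(x)>` (where `a_0 = g`) with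
`a_{k-1} ∣ a_{k-2} ∣ ... ∣ a_1 ∣ a_0 = g ∣ x^n - 1` in `Z_p[x]`, then
`C = <a_0(x) + u a_1(x) + ... + u^{k-1} a_{k-1}(x)>`. -/
theorem stmt3 (p k n : ℕ) (hp : p.Prime) (hk : 1 ≤ k) (hn : 0 < n)
    (hco : Nat.Coprime n p)
    (a : ℕ → Polynomial (ZMod p)) (Ck : Ideal (Rn p k n))
    (hchain : ∀ i, i + 1 < k → a (i + 1) ∣ a i)
    (hg : a 0 ∣ (X : Polynomial (ZMod p)) ^ n - 1)
    (hC : Ck = Ideal.span {c | ∃ i < k, c = uu p k n ^ i * liftP p k n (a i)}) :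
    Ck = Ideal.span {∑ i ∈ Finset.range k, uu p k n ^ i * liftP p k n (a i)} := by
  classical
  have hpI : Fact p.Prime := ⟨hp⟩
  set f : Polynomial (ZMod p) := X ^ n - 1 with hf
  set φ : Polynomial (ZMod p) →+* Rn p k n := liftP p k n with hφ
  set U : Rn p k n := uu p k n with hU
  set T : ℕ → Rn p k n := fun i => ∑ j ∈ Finset.range i, U ^ j * φ (a j) with hT
  -- chain divisibility
  have chain : ∀ d j, j + d < k → a (j + d) ∣ a j := by
    intro d
    induction d with
    | zero => intro j _; exact dvd_rfl
    | succ d ih =>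
      intro j hlt
      exact (hchain (j + d) (by omega)).trans (ih j (by omega))
  have chain' : ∀ i j, j ≤ i → i < k → a i ∣ a j := by
    intro i j hji hik
    obtain ⟨d, rfl⟩ := Nat.exists_eq_add_of_le hji
    exact chain d j hik
  have hdvdf : ∀ i, i < k → a i ∣ f := by
    intro i hi
    exact (chain' i 0 (Nat.zero_le _) hi).trans hg
  -- separability of f
  have hn0 : (n : ZMod p) ≠ 0 := by
    rw [Ne, ZMod.natCast_eq_zero_iff]
    intro hdvd
    exact hp.one_lt.ne' (hco.symm.eq_one_of_dvd hdvd)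
  have hsep : f.Separable := Polynomial.X_pow_sub_one_separable_iff.mpr hn0
  -- f maps to 0 in Rn
  have hφf : φ f = 0 := by
    show (Ideal.Quotient.mk _) (Polynomial.map (algebraMap (ZMod p) (Ru p k)) f) = 0
    rw [Ideal.Quotient.eq_zero_iff_mem]
    apply Ideal.subset_span
    simp [hf, Polynomial.map_sub, Polynomial.map_pow, Polynomial.map_one, Polynomial.map_X,
      Set.mem_singleton_iff]
  -- u^k = 0
  have hu : (uR p k) ^ k = 0 := by
    show (Ideal.Quotient.mk _) (X : Polynomial (ZMod p)) ^ k = 0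
    rw [← map_pow, Ideal.Quotient.eq_zero_iff_mem]
    exact Ideal.subset_span rfl
  have hUk : U ^ k = 0 := by
    show (Ideal.Quotient.mk _) (C (uR p k)) ^ k = 0
    rw [← map_pow, ← map_pow (C : Ru p k →+* Polynomial (Ru p k)), hu]
    simp
  -- the key identity : for each i < k, T (i+1) = b * (φ (a i) * T (i+1)) for some b
  have key : ∀ i, i < k → ∃ b : Rn p k n, T (i + 1) = b * (φ (a i) * T (i + 1)) := by
    intro i hi
    obtain ⟨d, hd⟩ := hdvdf i hi
    have hcop : IsCoprime (a i) d := Polynomial.Separable.isCoprime (hd ▸ hsep)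
    obtain ⟨α, β, hαβ⟩ := hcop
    have hdT : φ d * T (i + 1) = 0 := by
      rw [hT]
      simp only [Finset.mul_sum]
      rw [show φ d * ∑ j ∈ Finset.range (i + 1), U ^ j * φ (a j) =
        ∑ j ∈ Finset.range (i + 1), φ d * (U ^ j * φ (a j)) from
          Finset.mul_sum (Finset.range (i + 1)) (fun j => U ^ j * φ (a j)) (φ d)]
      apply Finset.sum_eq_zero
      intro j hj
      obtain ⟨e, he⟩ := chain' i j (by simpa using Nat.lt_succ_iff.mp (Finset.mem_range.mp hj)) hi
      have hde : d * a j = f * e := by rw [he, hd]; ring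
      calc φ d * (U ^ j * φ (a j)) = U ^ j * φ (d * a j) := by rw [map_mul]; ring
        _ = U ^ j * (φ f * φ e) := by rw [hde, map_mul]
        _ = 0 := by rw [hφf]; ring
    refine ⟨φ α, ?_⟩
    have h1 : φ α * φ (a i) + φ β * φ d = 1 := by
      rw [← map_mul, ← map_mul, ← map_add, hαβ, map_one]
    linear_combination (-(T (i + 1))) * h1 + φ β * hdT
  -- splitting the sum
  have hsplit : ∀ i, i < k → T k = T (i + 1) +
      U ^ (i + 1) * ∑ j ∈ Finset.range (k - (i + 1)), U ^ j * φ (a ((i + 1) + j)) := by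
    intro i hi
    have hk' : k = (i + 1) + (k - (i + 1)) := by omega
    rw [hT]
    simp only []
    rw [show (Finset.range k) = Finset.range ((i + 1) + (k - (i + 1))) from by congr 1,
      Finset.sum_range_add, show U ^ (i + 1) * ∑ j ∈ Finset.range (k - (i + 1)), U ^ j * φ (a ((i + 1) + j)) =
        ∑ j ∈ Finset.range (k - (i + 1)), U ^ (i + 1) * (U ^ j * φ (a ((i + 1) + j))) from
          Finset.mul_sum (Finset.range (k - (i + 1))) (fun j => U ^ j * φ (a ((i + 1) + j))) (U ^ (i + 1))]
    congr 1
    apply Finset.sum_congr rfl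
    intro j _
    rw [pow_add]
    ring
  have hstep : ∀ i, T (i + 1) = T i + U ^ i * φ (a i) := by
    intro i
    rw [hT]
    exact Finset.sum_range_succ _ _
  -- main induction
  have main : ∀ r m i, k ≤ m + r → i ≤ k → T k ∣ U ^ m * T i := by
    intro r
    induction r with
    | zero =>
      intro m i hm _
      obtain ⟨e, rfl⟩ := Nat.exists_eq_add_of_le (by omega : k ≤ m)
      rw [pow_add, hUk]
      exact ⟨0, by ring⟩
    | succ r ih =>
      intro m i hm hik
      match i with
      | 0 => simp [hT]; exact ⟨0, by ring⟩
      | Nat.succ i =>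
        have hi : i < k := by omega
        obtain ⟨b, hb⟩ := key i hi
        set ri : Rn p k n := ∑ j ∈ Finset.range (k - (i + 1)), U ^ j * φ (a ((i + 1) + j))
          with hri
        have hsp := hsplit i hi
        have hst := hstep i
        have h1 : T k ∣ U ^ (m + 1) * T (i + 1) := ih (m + 1) (i + 1) (by omega) hik
        have h2 : T k ∣ U ^ (m + 1) * T i := ih (m + 1) i (by omega) (by omega)
        have heq : U ^ m * T (i + 1) =
            (b * φ (a i) * U ^ m) * T k - (b * ri) * (U ^ (m + 1) * T (i + 1))
              + (b * ri) * (U ^ (m + 1) * T i) := by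
          linear_combination (U ^ m : Rn p k n) * hb - (b * φ (a i) * U ^ m) * hsp
            + (b * ri * U ^ (m + 1)) * hst
        rw [heq]
        obtain ⟨c1, hc1⟩ := h1
        obtain ⟨c2, hc2⟩ := h2
        exact ⟨b * φ (a i) * U ^ m - b * ri * c1 + b * ri * c2, by
          linear_combination (-(b * ri)) * hc1 + (b * ri) * hc2⟩
  have hTdvd : ∀ i, i ≤ k → T k ∣ T i := by
    intro i hi
    have := main k 0 i (by omega) hi
    simpa using this
  have hgen : ∀ i, i < k → T k ∣ U ^ i * φ (a i) := by
    intro i hi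
    have h1 := hTdvd (i + 1) (by omega)
    have h2 := hTdvd i (by omega)
    have : U ^ i * φ (a i) = T (i + 1) - T i := by rw [hstep i]; ring
    rw [this]
    exact dvd_sub h1 h2
  rw [hC]
  apply le_antisymm
  · rw [Ideal.span_le]
    rintro c ⟨i, hi, rfl⟩
    obtain ⟨c, hc⟩ := hgen i hi
    exact Ideal.mem_span_singleton'.mpr ⟨c, by rw [hc]; ring⟩
  · rw [Ideal.span_le]
    intro c hc
    rw [Set.mem_singleton_iff] at hc
    subst hc
    exact Ideal.sum_mem _ fun i hi =>
      Ideal.subset_span ⟨i, Finset.mem_range.mp hi, rfl⟩
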